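/- arXiv:1410.7066 — 2 statements merged into one kernel-verified Lean document; each statement's English description precedes it below -/
import Mathlib

section
/- Let T : H → H be a bounded operator on a Hilbert space, u ∈ range(T), and f† the minimal-norm solution of Tf = u. Then the Tikhonov solutions f_α = (T*T + αI)⁻¹T*u converge to f† in norm as α → 0⁺. -/
open ContinuousLinearMap Filter

set_option maxHeartbeats 800000

/-- Consistency of Tikhonov regularization with exact data: the Tikhonov
solutions `f_α = (T*T + αI)⁻¹ T* u` converge in norm to the minimal-norm
solution `f†` of `Tf = u` as `α → 0⁺`. -/
theorem tikhonov_convergence_exact_data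
    {H : Type*} [NormedAddCommGroup H] [InnerProductSpace ℝ H] [CompleteSpace H]
    (T : H →L[ℝ] H) (u : H) (fdag : H)
    (hsol : T fdag = u)
    (hmin : ∀ g : H, T g = u → ‖fdag‖ ≤ ‖g‖)
    (f : ℝ → H)
    (hf : ∀ α : ℝ, 0 < α →
      ((adjoint T).comp T + α • (1 : H →L[ℝ] H)) (f α) = adjoint T u) :
    Tendsto f (nhdsWithin 0 (Set.Ioi 0)) (nhds fdag) := by
  set A : H →L[ℝ] H := (adjoint T).comp T with hA
  -- fdag is orthogonal to ker T
  have hperp : ∀ k : H, T k = 0 → inner ℝ k fdag = (0 : ℝ) := by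
    intro k hk
    by_contra hne
    set c : ℝ := inner ℝ k fdag with hc
    have hkne : k ≠ 0 := by rintro rfl; simp [hc, inner_zero_left] at hne
    have hknorm : (0 : ℝ) < ‖k‖ ^ 2 := pow_pos (norm_pos_iff.mpr hkne) 2
    set t : ℝ := -c / ‖k‖ ^ 2 with ht
    have hsol' : T (fdag + t • k) = u := by
      simp [map_add, map_smul, hk, hsol]
    have hle := hmin (fdag + t • k) hsol'
    have hsq : ‖fdag‖ ^ 2 ≤ ‖fdag + t • k‖ ^ 2 := by
      have := pow_le_pow_left₀ (norm_nonneg fdag) hle 2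
      linarith
    have hexp : ‖fdag + t • k‖ ^ 2 = ‖fdag‖ ^ 2 + 2 * t * c + t ^ 2 * ‖k‖ ^ 2 := by
      rw [norm_add_sq_real, real_inner_smul_right, norm_smul, mul_pow, Real.norm_eq_abs,
        sq_abs, hc, real_inner_comm]
      ring
    rw [hexp, ht] at hsq
    have : ‖fdag‖ ^ 2 + 2 * (-c / ‖k‖ ^ 2) * c + (-c / ‖k‖ ^ 2) ^ 2 * ‖k‖ ^ 2
        = ‖fdag‖ ^ 2 - c ^ 2 / ‖k‖ ^ 2 := by field_simp; ring
    rw [this] at hsq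
    have hc2 : (0 : ℝ) < c ^ 2 := by positivity
    have : (0 : ℝ) < c ^ 2 / ‖k‖ ^ 2 := by positivity
    linarith
  -- fdag is in the closure of the range of A
  have hclos : fdag ∈ closure ((LinearMap.range (A : H →ₗ[ℝ] H) : Submodule ℝ H) : Set H) := by
    have : fdag ∈ (LinearMap.range (A : H →ₗ[ℝ] H) : Submodule ℝ H).topologicalClosure := by
      rw [← Submodule.orthogonal_orthogonal_eq_closure]
      rw [Submodule.mem_orthogonal]
      intro v hv
      have hTv : T v = 0 := by
        have h0 : inner ℝ (A v) v = (0 : ℝ) :=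
          (Submodule.mem_orthogonal _ _).mp hv (A v) (LinearMap.mem_range_self _ v)
        have : inner ℝ (T v) (T v) = (0 : ℝ) := by
          rw [← h0]; simp [hA, ContinuousLinearMap.adjoint_inner_left]
        have := inner_self_eq_zero.mp this
        exact this
      exact hperp v hTv
    exact this
  -- main estimate
  rw [Metric.tendsto_nhdsWithin_nhds]
  intro ε hε
  obtain ⟨y, hy, hyd⟩ := Metric.mem_closure_iff.mp hclos (ε / 2) (by positivity)
  obtain ⟨h, rfl⟩ := hy
  refine ⟨ε ^ 2 / (2 * (‖T h‖ ^ 2 + 1)), by positivity, ?_⟩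
  intro α hα hdist
  have hα0 : (0 : ℝ) < α := hα
  rw [Real.dist_eq, sub_zero, abs_of_pos hα0] at hdist
  set x : H := f α - fdag with hx
  set r : H := fdag - A h with hr
  have hrnorm : ‖r‖ < ε / 2 := by
    rw [dist_eq_norm] at hyd; exact hyd
  -- the key equation : (A + α) x = -α • fdag
  have hkey : A x + α • x = -(α • fdag) := by
    have h1 := hf α hα0
    have h2 : adjoint T u = A fdag := by rw [← hsol]; simp [hA]
    have h3 : A (f α) + α • (f α) = A fdag := by
      rw [← h2, ← h1]; simp
    simp only [hx, map_sub, smul_sub]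
    have : A (f α) - A fdag + (α • f α - α • fdag) = (A (f α) + α • f α) - A fdag - α • fdag := by
      abel
    rw [this, h3]
    abel
  -- take inner ℝ product with x
  have hinner : ‖T x‖ ^ 2 + α * ‖x‖ ^ 2 = -(α * inner ℝ fdag x) := by
    have := congrArg (fun z => (inner ℝ z x : ℝ)) hkey
    simp only [inner_add_left, inner_smul_left, inner_neg_left,
      RCLike.star_def, starRingEnd_apply, star_trivial] at this
    rw [show (inner ℝ (A x) x : ℝ) = ‖T x‖ ^ 2 by
        simp [hA, ContinuousLinearMap.adjoint_inner_left, real_inner_self_eq_norm_sq],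
      show (inner ℝ x x : ℝ) = ‖x‖ ^ 2 from real_inner_self_eq_norm_sq x] at this
    linarith [this]
  -- decompose fdag = A h + r
  have hfd : fdag = A h + r := by rw [hr]; abel
  have hsplit : (inner ℝ fdag x : ℝ) = inner ℝ (T h) (T x) + inner ℝ r x := by
    rw [hfd, inner_add_left]
    congr 1
    simp [hA, ContinuousLinearMap.adjoint_inner_left, real_inner_comm]
  rw [hsplit] at hinner
  have hb1 : (inner ℝ (T h) (T x) : ℝ) ≥ -(‖T h‖ * ‖T x‖) := by
    have := abs_real_inner_le_norm (T h) (T x)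
    have := neg_abs_le (inner ℝ (T h) (T x) : ℝ)
    nlinarith [abs_real_inner_le_norm (T h) (T x)]
  have hb2 : (inner ℝ r x : ℝ) ≥ -(‖r‖ * ‖x‖) := by
    nlinarith [abs_real_inner_le_norm r x, neg_abs_le (inner ℝ r x : ℝ)]
  -- derive ‖x‖² ≤ α ‖T h‖² + ‖r‖²
  have hmain : ‖T x‖ ^ 2 + α * ‖x‖ ^ 2 ≤ α * (‖T h‖ * ‖T x‖) + α * (‖r‖ * ‖x‖) := by
    have e1 : α * (-(‖T h‖ * ‖T x‖)) ≤ α * inner ℝ (T h) (T x) :=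
      mul_le_mul_of_nonneg_left hb1 hα0.le
    have e2 : α * (-(‖r‖ * ‖x‖)) ≤ α * inner ℝ r x :=
      mul_le_mul_of_nonneg_left hb2 hα0.le
    nlinarith [hinner]
  have hxbound : ‖x‖ ^ 2 ≤ α * ‖T h‖ ^ 2 + ‖r‖ ^ 2 := by
    nlinarith [sq_nonneg (‖T x‖ - α * ‖T h‖), mul_nonneg hα0.le (sq_nonneg (‖r‖ - ‖x‖)),
      sq_nonneg (‖T x‖), hα0, hmain]
  -- conclude
  rw [dist_eq_norm]
  have hxn : ‖f α - fdag‖ = ‖x‖ := rfl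
  rw [hxn]
  have h1 : α * ‖T h‖ ^ 2 < ε ^ 2 / 2 := by
    have hδ : α < ε ^ 2 / (2 * (‖T h‖ ^ 2 + 1)) := hdist
    have hpos : (0:ℝ) < ‖T h‖ ^ 2 + 1 := by positivity
    calc α * ‖T h‖ ^ 2 ≤ α * (‖T h‖ ^ 2 + 1) := by nlinarith
      _ < ε ^ 2 / (2 * (‖T h‖ ^ 2 + 1)) * (‖T h‖ ^ 2 + 1) := by
          apply mul_lt_mul_of_pos_right hδ hpos
      _ = ε ^ 2 / 2 := by field_simp
  have h2 : ‖r‖ ^ 2 < ε ^ 2 / 4 := by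
    nlinarith [norm_nonneg r, hrnorm, hε]
  have hx2 : ‖x‖ ^ 2 < ε ^ 2 := by nlinarith [hxbound, h1, h2, hε]
  nlinarith [norm_nonneg x, hε, hx2]
end

section
/- The function α ↦ ‖T f_α − u‖, where f_α = (T*T + αI)⁻¹T*u, is nondecreasing in α > 0, and the function α ↦ ‖f_α‖ is nonincreasing in α > 0. -/
open ContinuousLinearMap

open RealInnerProductSpace in
private lemma tikhonov_min_aux
    {H : Type*} [NormedAddCommGroup H] [InnerProductSpace ℝ H] [CompleteSpace H]
    (T : H →L[ℝ] H) (u : H) (α : ℝ) (hα : 0 < α) (fa : H)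
    (hfa : ((adjoint T).comp T + α • (1 : H →L[ℝ] H)) fa = adjoint T u) (g : H) :
    ‖T fa - u‖ ^ 2 + α * ‖fa‖ ^ 2 + α * ‖g - fa‖ ^ 2 ≤ ‖T g - u‖ ^ 2 + α * ‖g‖ ^ 2 := by
  have key : adjoint T (T fa - u) + α • fa = 0 := by
    have h1 : adjoint T (T fa) + α • fa = adjoint T u := by
      simpa [ContinuousLinearMap.add_apply, ContinuousLinearMap.smul_apply,
        ContinuousLinearMap.comp_apply] using hfa
    rw [map_sub, sub_add_eq_add_sub, h1, sub_self]
  set h := g - fa with hh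
  have hg : g = fa + h := by simp [hh]
  have cross : ⟪T fa - u, T h⟫ + α * ⟪fa, h⟫ = 0 := by
    rw [← ContinuousLinearMap.adjoint_inner_left, ← real_inner_smul_left,
      ← inner_add_left, key, inner_zero_left]
  have e1 : ‖T g - u‖ ^ 2 = ‖T fa - u‖ ^ 2 + 2 * ⟪T fa - u, T h⟫ + ‖T h‖ ^ 2 := by
    have hT : T g - u = (T fa - u) + T h := by rw [hg, map_add]; abel
    rw [hT, norm_add_sq_real]
  have e2 : ‖g‖ ^ 2 = ‖fa‖ ^ 2 + 2 * ⟪fa, h⟫ + ‖h‖ ^ 2 := by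
    rw [hg, norm_add_sq_real]
  nlinarith [sq_nonneg ‖T h‖, sq_nonneg ‖h‖, hα.le,
    mul_nonneg hα.le (sq_nonneg ‖h‖)]

/-- Monotonicity underlying the Discrepancy Principle: `α ↦ ‖T f_α − u‖` is
nondecreasing and `α ↦ ‖f_α‖` is nonincreasing on `α > 0`. -/
theorem tikhonov_monotonicity
    {H : Type*} [NormedAddCommGroup H] [InnerProductSpace ℝ H] [CompleteSpace H]
    (T : H →L[ℝ] H) (u : H)
    (f : ℝ → H)
    (hf : ∀ α : ℝ, 0 < α →
      ((adjoint T).comp T + α • (1 : H →L[ℝ] H)) (f α) = adjoint T u) :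
    (∀ α β : ℝ, 0 < α → α ≤ β → ‖T (f α) - u‖ ≤ ‖T (f β) - u‖) ∧
    (∀ α β : ℝ, 0 < α → α ≤ β → ‖f β‖ ≤ ‖f α‖) := by
  -- nonincreasing norms first
  have norm_mono : ∀ α β : ℝ, 0 < α → α ≤ β → ‖f β‖ ≤ ‖f α‖ := by
    intro α β hα hαβ
    have hβ : 0 < β := lt_of_lt_of_le hα hαβ
    have A := tikhonov_min_aux T u α hα (f α) (hf α hα) (f β)
    have B := tikhonov_min_aux T u β hβ (f β) (hf β hβ) (f α)
    by_contra hcon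
    push_neg at hcon
    have hsq : ‖f α‖ ^ 2 < ‖f β‖ ^ 2 := by
      have := norm_nonneg (f α)
      nlinarith [norm_nonneg (f β)]
    have hd0 : 0 ≤ β * ‖f α - f β‖ ^ 2 := mul_nonneg hβ.le (sq_nonneg _)
    have hd0' : 0 ≤ α * ‖f β - f α‖ ^ 2 := mul_nonneg hα.le (sq_nonneg _)
    -- summing A and B : (β - α) * (‖f β‖² - ‖f α‖²) + (α+β)*‖d‖² ≤ 0
    have hdiff : (β - α) * (‖f β‖ ^ 2 - ‖f α‖ ^ 2) ≥ 0 :=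
      mul_nonneg (by linarith) (by linarith)
    have hdz : β * ‖f α - f β‖ ^ 2 = 0 := by nlinarith
    have hsqz : ‖f α - f β‖ ^ 2 = 0 := (mul_eq_zero.mp hdz).resolve_left hβ.ne'
    have hn : ‖f α - f β‖ = 0 := by nlinarith [norm_nonneg (f α - f β)]
    have hfeq : f α = f β := sub_eq_zero.mp (norm_eq_zero.mp hn)
    rw [hfeq] at hcon
    exact lt_irrefl _ hcon
  refine ⟨?_, norm_mono⟩
  intro α β hα hαβ
  have hβ : 0 < β := lt_of_lt_of_le hα hαβ
  have A := tikhonov_min_aux T u α hα (f α) (hf α hα) (f β)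
  have hn := norm_mono α β hα hαβ
  have hsq : ‖f β‖ ^ 2 ≤ ‖f α‖ ^ 2 := by nlinarith [norm_nonneg (f β)]
  have hsq2 : ‖T (f α) - u‖ ^ 2 ≤ ‖T (f β) - u‖ ^ 2 := by
    nlinarith [mul_nonneg hα.le (sq_nonneg ‖f β - f α‖)]
  exact le_of_pow_le_pow_left₀ two_ne_zero (norm_nonneg _) hsq2
end
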